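/- Let n ≥ 2, λ ∈ (0,1), and γ ∈ [0,1) with λ < 1 − γ. Let T : [0,1] → [0,1] be piecewise C² expanding with contraction bound λ, and let T̂ be the globally coupled map on [0,1]^n built from T with coupling γ. Let h : [0,1]^n → [0,∞) be a continuous function with strictly positive infimum, and let μ be the Borel measure on [0,1]^n with density h with respect to Lebesgue measure. Then the limit lim_{ν→0⁺} μ(S_ν ∩ T̂^{−1}(S_ν)) / μ(S_ν) exists and equals (1−γ)^{−(n−1)} · (∫₀¹ h(x,…,x)·|T'(x)|^{−(n−1)} dx) / (∫₀¹ h(x,…,x) dx), where T'(x) is defined at Lebesgue-almost every x ∈ [0,1] (namely at all interior points of the partition intervals of T). -/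

import Mathlib

open MeasureTheory Set Filter Pointwise

/-- The globally coupled map `T̂` on `[0,1]^n` built from a local map `T` with
coupling strength `γ`: `T̂(x)_i = (1-γ)·T(x_i) + (γ/n)·∑_j T(x_j)`. -/
noncomputable def coupledMap (n : ℕ) (γ : ℝ) (T : ℝ → ℝ) :
    (Fin n → ℝ) → (Fin n → ℝ) :=
  fun x i => (1 - γ) * T (x i) + (γ / n) * ∑ j, T (x j)

/-- The unit cube `[0,1]^n`. -/
def unitCube (n : ℕ) : Set (Fin n → ℝ) := {x | ∀ i, x i ∈ Icc (0:ℝ) 1}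

/-- The synchronization neighborhood `S_ν = {x ∈ [0,1]^n : |x_i − x_j| ≤ ν ∀ i ≠ j}`. -/
def syncSet (n : ℕ) (ν : ℝ) : Set (Fin n → ℝ) :=
  {x ∈ unitCube n | ∀ i j, i ≠ j → |x i - x j| ≤ ν}

/-- `T : [0,1] → [0,1]` is piecewise `C²` expanding with contraction bound `lam`,
with partition points `a 0 = 0 < a 1 < ⋯ < a q = 1`. -/
def PiecewiseC2Expanding (T : ℝ → ℝ) (lam : ℝ) (q : ℕ) (a : ℕ → ℝ) : Prop :=
  1 ≤ q ∧ a 0 = 0 ∧ a q = 1 ∧ (∀ l < q, a l < a (l + 1)) ∧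
  (∀ l < q, Set.InjOn T (Ioo (a l) (a (l + 1)))) ∧
  (∀ l < q, ∃ g : ℝ → ℝ, ContDiff ℝ 2 g ∧ Set.EqOn T g (Ioo (a l) (a (l + 1)))) ∧
  (∀ l < q, ∀ x ∈ Ioo (a l) (a (l + 1)), 1 / lam ≤ |deriv T x|)

/-- The Borel measure on `[0,1]^n` with density `h` with respect to Lebesgue measure. -/
noncomputable def densityMeasure (n : ℕ) (h : (Fin n → ℝ) → ℝ) : Measure (Fin n → ℝ) :=
  (volume.restrict (unitCube n)).withDensity fun x => ENNReal.ofReal (h x)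


namespace SyncAux


noncomputable def prof (m : ℕ) (s ν : ℝ) (v : Fin m → ℝ) : Fin (m+1) → ℝ :=
  Fin.cons s (fun j => s + ν * v j)

def csn {m : ℕ} (v : Fin m → ℝ) : Fin (m+1) → ℝ := Fin.cons 0 v

def Qset (m : ℕ) (c : ℝ) : Set (Fin m → ℝ) :=
  {v | ∀ i j : Fin (m+1), |csn v i - csn v j| ≤ c}

lemma prof_zero {m : ℕ} (s ν : ℝ) (v : Fin m → ℝ) : prof m s ν v 0 = s := rfl

lemma prof_succ {m : ℕ} (s ν : ℝ) (v : Fin m → ℝ) (j : Fin m) :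
    prof m s ν v j.succ = s + ν * v j := rfl

lemma prof_sub {m : ℕ} (s ν : ℝ) (v : Fin m → ℝ) (i j : Fin (m+1)) :
    prof m s ν v i - prof m s ν v j = ν * (csn v i - csn v j) := by
  cases i using Fin.cases <;> cases j using Fin.cases <;>
    simp [prof, csn] <;> ring

lemma prof_mem_syncSet {m : ℕ} {s ν : ℝ} (hν : 0 < ν) (v : Fin m → ℝ) :
    prof m s ν v ∈ syncSet (m+1) ν ↔
      (∀ i, prof m s ν v i ∈ Icc (0:ℝ) 1) ∧ v ∈ Qset m 1 := by
  constructor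
  · rintro ⟨hc, hd⟩
    refine ⟨hc, fun i j => ?_⟩
    rcases eq_or_ne i j with rfl | hij
    · simp
    · have h2 := hd i j hij
      rw [prof_sub, abs_mul, abs_of_pos hν] at h2
      have := (mul_le_iff_le_one_right hν).mp (by linarith [h2])
      linarith [this]
  · rintro ⟨hc, hQ⟩
    refine ⟨hc, fun i j _ => ?_⟩
    rw [prof_sub, abs_mul, abs_of_pos hν]
    calc ν * |csn v i - csn v j| ≤ ν * 1 := by
          exact mul_le_mul_of_nonneg_left (hQ i j) hν.le
      _ = ν := mul_one ν

lemma coupled_sub {n : ℕ} (γ : ℝ) (T : ℝ → ℝ) (x : Fin n → ℝ) (i j : Fin n) :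
    coupledMap n γ T x i - coupledMap n γ T x j = (1 - γ) * (T (x i) - T (x j)) := by
  simp only [coupledMap]; ring

lemma coupled_mem_cube {n : ℕ} (hn : 0 < n) {γ : ℝ} (hγ0 : 0 ≤ γ) (hγ1 : γ ≤ 1)
    {T : ℝ → ℝ} (hT : Set.MapsTo T (Icc 0 1) (Icc 0 1)) {x : Fin n → ℝ}
    (hx : x ∈ unitCube n) : coupledMap n γ T x ∈ unitCube n := by
  intro i
  have hTx : ∀ j, T (x j) ∈ Icc (0:ℝ) 1 := fun j => hT (hx j)
  have hsum0 : (0:ℝ) ≤ ∑ j, T (x j) :=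
    Finset.sum_nonneg fun j _ => (hTx j).1
  have hsum1 : ∑ j, T (x j) ≤ (n:ℝ) := by
    calc ∑ j, T (x j) ≤ ∑ _j : Fin n, (1:ℝ) :=
          Finset.sum_le_sum fun j _ => (hTx j).2
      _ = (n:ℝ) := by simp
  have hnpos : (0:ℝ) < n := by exact_mod_cast hn
  constructor
  · have h1 : 0 ≤ (1 - γ) * T (x i) := mul_nonneg (by linarith) (hTx i).1
    have h2 : 0 ≤ (γ / n) * ∑ j, T (x j) :=
      mul_nonneg (div_nonneg hγ0 hnpos.le) hsum0
    simp only [coupledMap]; linarith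
  · have h1 : (1 - γ) * T (x i) ≤ 1 - γ := by
      nlinarith [(hTx i).2]
    have h2 : (γ / n) * ∑ j, T (x j) ≤ γ := by
      rw [div_mul_eq_mul_div, div_le_iff₀ hnpos]
      nlinarith
    simp only [coupledMap]; linarith

lemma numSet_eq {n : ℕ} (hn : 0 < n) {γ : ℝ} (hγ0 : 0 ≤ γ) (hγ1 : γ ≤ 1)
    {T : ℝ → ℝ} (hT : Set.MapsTo T (Icc 0 1) (Icc 0 1)) {ν : ℝ} (hν : 0 ≤ ν) :
    syncSet n ν ∩ (coupledMap n γ T) ⁻¹' (syncSet n ν) =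
      {x ∈ syncSet n ν | ∀ i j, (1 - γ) * |T (x i) - T (x j)| ≤ ν} := by
  ext x
  constructor
  · rintro ⟨hx, hy, hd⟩
    refine ⟨hx, fun i j => ?_⟩
    rcases eq_or_ne i j with rfl | hij
    · simpa using hν
    · have := hd i j hij
      rw [coupled_sub, abs_mul, abs_of_nonneg (by linarith : (0:ℝ) ≤ 1 - γ)] at this
      exact this
  · rintro ⟨⟨hc, hd⟩, hP⟩
    refine ⟨⟨hc, hd⟩, coupled_mem_cube hn hγ0 hγ1 hT hc, fun i j _ => ?_⟩
    rw [coupled_sub, abs_mul, abs_of_nonneg (by linarith : (0:ℝ) ≤ 1 - γ)]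
    exact hP i j



variable {q : ℕ} {a : ℕ → ℝ}

def Uset (q : ℕ) (a : ℕ → ℝ) : Set ℝ := ⋃ l ∈ Finset.range q, Ioo (a l) (a (l+1))

lemma isOpen_Uset : IsOpen (Uset q a) :=
  isOpen_biUnion fun _ _ => isOpen_Ioo

lemma a_mono (hstep : ∀ l < q, a l < a (l+1)) :
    ∀ i j, i ≤ j → j ≤ q → a i ≤ a j := by
  intro i j hij hjq
  induction j with
  | zero => simp_all
  | succ k ih =>
    rcases Nat.eq_or_lt_of_le hij with rfl | hlt
    · exact le_rfl
    · have hk : i ≤ k := Nat.lt_succ_iff.mp hlt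
      have := ih hk (by omega)
      have h2 := hstep k (by omega)
      linarith

lemma Uset_subset (ha0 : a 0 = 0) (haq : a q = 1) (hstep : ∀ l < q, a l < a (l+1)) :
    Uset q a ⊆ Ioo (0:ℝ) 1 := by
  intro s hs
  simp only [Uset, Finset.mem_range, mem_iUnion] at hs
  obtain ⟨l, hl, h1, h2⟩ := hs
  have hl0 : a 0 ≤ a l := a_mono hstep 0 l (Nat.zero_le _) (by omega)
  have hlq : a (l+1) ≤ a q := a_mono hstep (l+1) q (by omega) le_rfl
  exact ⟨by rw [← ha0]; linarith, by rw [← haq]; linarith⟩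

lemma cover_lemma (ha0 : a 0 = 0) (haq : a q = 1) (hstep : ∀ l < q, a l < a (l+1))
    {s : ℝ} (hs : s ∈ Icc (0:ℝ) 1) (hne : ∀ l ≤ q, s ≠ a l) : s ∈ Uset q a := by
  classical
  have h0 : a 0 < s := by
    rw [ha0]; rcases hs.1.lt_or_eq with h | h
    · exact h
    · exact absurd h.symm (by simpa [ha0] using hne 0 (Nat.zero_le _))
  set P : ℕ → Prop := fun l => a l < s with hP
  have hPq : ¬ P q := by
    simp only [hP, haq, not_lt]
    exact hs.2
  have hq0 : 0 < q := by
    by_contra hq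
    have : q = 0 := by omega
    exact hPq (by simpa [hP, this] using h0)
  obtain ⟨l, hlq, hPl, hmax⟩ : ∃ l, l ≤ q ∧ P l ∧ ∀ k, l < k → k ≤ q → ¬ P k :=
    ⟨Nat.findGreatest P q, Nat.findGreatest_le q,
      Nat.findGreatest_spec (Nat.zero_le _) h0,
      fun k hk hkq => Nat.findGreatest_is_greatest hk hkq⟩
  have hlltq : l < q := by
    rcases Nat.eq_or_lt_of_le hlq with rfl | h
    · exact absurd hPl hPq
    · exact h
  have hnext : ¬ P (l+1) := hmax (l+1) (Nat.lt_succ_self _) (by omega)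
  have : s < a (l+1) :=
    lt_of_le_of_ne (not_lt.mp hnext) (hne (l+1) (by omega))
  simp only [Uset, Finset.mem_range, mem_iUnion]
  exact ⟨l, hlltq, hPl, this⟩

lemma continuousOn_T_Uset {T : ℝ → ℝ}
    (hg : ∀ l < q, ∃ g : ℝ → ℝ, ContDiff ℝ 2 g ∧ Set.EqOn T g (Ioo (a l) (a (l + 1)))) :
    ContinuousOn T (Uset q a) := by
  intro s hs
  simp only [Uset, Finset.mem_range, mem_iUnion] at hs
  obtain ⟨l, hl, hsl⟩ := hs
  obtain ⟨g, hgc, hge⟩ := hg l hl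
  have : ContinuousAt T s := by
    have : T =ᶠ[nhds s] g :=
      Filter.eventuallyEq_of_mem (isOpen_Ioo.mem_nhds hsl) hge
    exact (hgc.continuous.continuousAt).congr this.symm
  exact this.continuousWithinAt

lemma hasDerivAt_T {T : ℝ → ℝ} {l : ℕ} (hl : l < q)
    (hg : ∀ l < q, ∃ g : ℝ → ℝ, ContDiff ℝ 2 g ∧ Set.EqOn T g (Ioo (a l) (a (l + 1))))
    {s : ℝ} (hs : s ∈ Ioo (a l) (a (l+1))) : HasDerivAt T (deriv T s) s := by
  obtain ⟨g, hgc, hge⟩ := hg l hl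
  have heq : T =ᶠ[nhds s] g :=
    Filter.eventuallyEq_of_mem (isOpen_Ioo.mem_nhds hs) hge
  have hgd : HasDerivAt g (deriv g s) s :=
    ((hgc.differentiable (by norm_num)).differentiableAt).hasDerivAt
  rw [heq.deriv_eq]
  exact hgd.congr_of_eventuallyEq heq




lemma continuous_csn {m : ℕ} (i : Fin (m+1)) :
    Continuous fun v : Fin m → ℝ => csn v i := by
  cases i using Fin.cases with
  | zero => simpa [csn] using continuous_const
  | succ k => simpa [csn] using continuous_apply k

lemma csn_smul {m : ℕ} (r : ℝ) (v : Fin m → ℝ) : csn (r • v) = r • csn v := by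
  funext i
  cases i using Fin.cases <;> simp [csn]

lemma isClosed_Qset (m : ℕ) (c : ℝ) : IsClosed (Qset m c) := by
  have : Qset m c = ⋂ (i : Fin (m+1)) (j : Fin (m+1)),
      {v : Fin m → ℝ | |csn v i - csn v j| ≤ c} := by
    ext v; simp [Qset, mem_iInter]
  rw [this]
  exact isClosed_iInter fun i => isClosed_iInter fun j =>
    isClosed_le (Continuous.abs ((continuous_csn i).sub (continuous_csn j))) continuous_const

lemma measurableSet_Qset (m : ℕ) (c : ℝ) : MeasurableSet (Qset m c) :=
  (isClosed_Qset m c).measurableSet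

lemma Qset_subset_box {m : ℕ} {c : ℝ} {v : Fin m → ℝ} (hv : v ∈ Qset m c) (j : Fin m) :
    |v j| ≤ c := by
  have := hv j.succ 0
  simpa [csn] using this

lemma Qset_smul {m : ℕ} {c : ℝ} (hc : 0 < c) : Qset m c = c • Qset m 1 := by
  ext v
  rw [mem_smul_set_iff_inv_smul_mem₀ hc.ne']
  constructor
  · intro hv i j
    have := hv i j
    rw [csn_smul]
    simp only [Pi.smul_apply, smul_eq_mul]
    rw [← mul_sub, abs_mul, abs_of_nonneg (inv_nonneg.mpr hc.le)]
    rw [inv_mul_le_iff₀ hc, mul_one]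
    exact this
  · intro hv i j
    have := hv i j
    rw [csn_smul] at this
    simp only [Pi.smul_apply, smul_eq_mul] at this
    rw [← mul_sub, abs_mul, abs_of_nonneg (inv_nonneg.mpr hc.le),
      inv_mul_le_iff₀ hc, mul_one] at this
    exact this

lemma volume_Qset_smul {m : ℕ} {c : ℝ} (hc : 0 < c) :
    volume (Qset m c) = ENNReal.ofReal (c ^ m) * volume (Qset m 1) := by
  rw [Qset_smul hc, Measure.addHaar_smul]
  congr 2
  rw [Module.finrank_fin_fun, abs_of_nonneg (pow_nonneg hc.le _)]

lemma volume_Qset_lt_top (m : ℕ) : volume (Qset m 1) < ⊤ := by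
  have hsub : Qset m 1 ⊆ Set.pi Set.univ (fun _ : Fin m => Icc (-1:ℝ) 1) := by
    intro v hv j _
    exact abs_le.mp (Qset_subset_box hv j)
  calc volume (Qset m 1) ≤ volume (Set.pi Set.univ (fun _ : Fin m => Icc (-1:ℝ) 1)) :=
        measure_mono hsub
    _ = ∏ _j : Fin m, volume (Icc (-1:ℝ) 1) := volume_pi_pi _
    _ < ⊤ := by
        rw [Real.volume_Icc]
        refine ENNReal.prod_lt_top fun j _ => ?_
        simp [ENNReal.ofReal_lt_top]

lemma volume_Qset_pos (m : ℕ) : 0 < volume (Qset m 1) := by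
  have hsub : Set.pi Set.univ (fun _ : Fin m => Icc (0:ℝ) (1/2)) ⊆ Qset m 1 := by
    intro v hv i j
    have hv' : ∀ k : Fin m, v k ∈ Icc (0:ℝ) (1/2) := fun k => hv k (mem_univ k)
    have hb : ∀ i : Fin (m+1), csn v i ∈ Icc (0:ℝ) (1/2) := by
      intro i
      cases i using Fin.cases with
      | zero => simp [csn]
      | succ k => simpa [csn] using hv' k
    have h1 := hb i; have h2 := hb j
    rw [abs_le]
    constructor <;> [linarith [h1.1, h1.2, h2.1, h2.2]; linarith [h1.1, h1.2, h2.1, h2.2]]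
  have : 0 < volume (Set.pi Set.univ (fun _ : Fin m => Icc (0:ℝ) (1/2))) := by
    rw [volume_pi_pi]
    refine CanonicallyOrderedAdd.prod_pos.mpr fun j _ => ?_
    rw [Real.volume_Icc]
    norm_num
  exact lt_of_lt_of_le this (measure_mono hsub)

lemma null_coord {n : ℕ} (i : Fin n) (c : ℝ) :
    volume {x : Fin n → ℝ | x i = c} = 0 := by
  have : {x : Fin n → ℝ | x i = c} =
      Set.pi Set.univ (Function.update (fun _ : Fin n => (Set.univ : Set ℝ)) i {c}) := by
    ext x
    simp only [mem_setOf_eq, Set.mem_pi, Set.mem_univ, forall_true_left]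
    constructor
    · intro hx j
      rcases eq_or_ne j i with rfl | hj
      · simp [Function.update, hx]
      · simp [Function.update, hj]
    · intro hx
      have := hx i
      simpa [Function.update] using this
  rw [this, volume_pi_pi]
  apply Finset.prod_eq_zero (Finset.mem_univ i)
  simp [Function.update]

lemma null_diff_coord {m : ℕ} {k k' : Fin m} (hkk : k ≠ k') (c : ℝ) :
    volume {v : Fin m → ℝ | v k - v k' = c} = 0 := by
  classical
  set L : (Fin m → ℝ) →ₗ[ℝ] ℝ := (LinearMap.proj k : (Fin m → ℝ) →ₗ[ℝ] ℝ) - (LinearMap.proj k' : (Fin m → ℝ) →ₗ[ℝ] ℝ) with hL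
  have hLval : ∀ v, L v = v k - v k' := fun v => rfl
  have hv₀ : L (Pi.single k c) = c := by
    rw [hLval]
    simp [Pi.single_apply, hkk.symm]
  have hset : {v : Fin m → ℝ | v k - v k' = c} =
      (fun v => (-(Pi.single k c)) + v) ⁻¹' (LinearMap.ker L : Set (Fin m → ℝ)) := by
    ext v
    simp only [mem_setOf_eq, mem_preimage, SetLike.mem_coe, LinearMap.mem_ker, hLval,
      Pi.add_apply, Pi.neg_apply, Pi.single_apply, if_pos rfl]
    rw [if_neg (by simpa using hkk.symm : ¬ (k' = k))]
    simp only [if_true, neg_zero, zero_add]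
    constructor <;> intro hh <;> linarith
  rw [hset, measure_preimage_add]
  apply Measure.addHaar_submodule
  intro htop
  have h1 : L (Pi.single k 1) = 1 := by
    rw [hLval]; simp [Pi.single_apply, hkk.symm]
  have : Pi.single k (1:ℝ) ∈ LinearMap.ker L := htop ▸ Submodule.mem_top
  rw [LinearMap.mem_ker, h1] at this
  exact one_ne_zero this

lemma null_pair {m : ℕ} {i j : Fin (m+1)} (hij : i ≠ j) (c : ℝ) :
    volume {v : Fin m → ℝ | csn v i - csn v j = c} = 0 := by
  cases i using Fin.cases with
  | zero =>
    cases j using Fin.cases with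
    | zero => exact absurd rfl hij
    | succ k =>
      have : {v : Fin m → ℝ | csn v 0 - csn v k.succ = c} ⊆ {v : Fin m → ℝ | v k = -c} := by
        intro v hv; simp only [csn, Fin.cons_zero, Fin.cons_succ, mem_setOf_eq] at hv ⊢; linarith
      exact measure_mono_null this (null_coord k (-c))
  | succ k =>
    cases j using Fin.cases with
    | zero =>
      have : {v : Fin m → ℝ | csn v k.succ - csn v 0 = c} ⊆ {v : Fin m → ℝ | v k = c} := by
        intro v hv; simp only [csn, Fin.cons_zero, Fin.cons_succ, mem_setOf_eq] at hv ⊢; linarith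
      exact measure_mono_null this (null_coord k c)
    | succ k' =>
      have hkk : k ≠ k' := by
        rintro rfl; exact hij rfl
      have : {v : Fin m → ℝ | csn v k.succ - csn v k'.succ = c} =
          {v : Fin m → ℝ | v k - v k' = c} := by
        ext v; simp [csn]
      rw [this]
      exact null_diff_coord hkk c



lemma unitCube_eq_Icc (n : ℕ) : unitCube n = Icc (0 : Fin n → ℝ) 1 := by
  ext x
  simp [unitCube, Pi.le_def, Set.mem_Icc, forall_and]

lemma isCompact_unitCube (n : ℕ) : IsCompact (unitCube n) := by
  rw [unitCube_eq_Icc]; exact isCompact_Icc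

lemma isClosed_unitCube (n : ℕ) : IsClosed (unitCube n) := by
  rw [unitCube_eq_Icc]; exact isClosed_Icc

lemma measurableSet_unitCube (n : ℕ) : MeasurableSet (unitCube n) :=
  (isClosed_unitCube n).measurableSet

lemma volume_unitCube_lt_top (n : ℕ) : volume (unitCube n) < ⊤ :=
  (isCompact_unitCube n).measure_lt_top

lemma rep_integral {m : ℕ} (F : (Fin (m+1) → ℝ) → ℝ)
    (hF : Integrable F (volume : Measure (Fin (m+1) → ℝ))) {ν : ℝ} (hν : 0 < ν) :
    ∫ x, F x = ν ^ m * ∫ s : ℝ, ∫ v : Fin m → ℝ, F (prof m s ν v) := by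
  classical
  set e := MeasurableEquiv.piFinSuccAbove (fun _ : Fin (m+1) => ℝ) 0 with he
  have hmp : MeasurePreserving e (volume : Measure (Fin (m+1) → ℝ))
      ((volume : Measure ℝ).prod (volume : Measure (Fin m → ℝ))) := by
    have := measurePreserving_piFinSuccAbove (fun _ : Fin (m+1) => (volume : Measure ℝ)) 0
    exact this
  set G : ℝ × (Fin m → ℝ) → ℝ := fun p => F (Fin.cons p.1 p.2) with hG
  have h1 : ∀ x, G (e x) = F x := by
    intro x
    show F (Fin.cons (x 0) (fun j => x ((0 : Fin (m+1)).succAbove j))) = F x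
    congr 1
    simp only [Fin.zero_succAbove]
    exact Fin.cons_self_tail x
  have hGint : Integrable G ((volume : Measure ℝ).prod (volume : Measure (Fin m → ℝ))) := by
    rw [← hmp.map_eq, integrable_map_equiv]
    have : (G ∘ e) = F := funext h1
    rwa [this]
  have step1 : ∫ x, F x = ∫ p, G p ∂((volume : Measure ℝ).prod volume) := by
    rw [← hmp.integral_comp e.measurableEmbedding G]
    exact integral_congr_ae (Eventually.of_forall fun x => (h1 x).symm)
  have step2 : ∫ p, G p ∂((volume : Measure ℝ).prod volume)
      = ∫ s : ℝ, ∫ w : Fin m → ℝ, G (s, w) := integral_prod G hGint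
  have key : ∀ s : ℝ, ∫ w : Fin m → ℝ, F (Fin.cons s w)
      = ν ^ m * ∫ v : Fin m → ℝ, F (prof m s ν v) := by
    intro s
    have t1 : ∫ u : Fin m → ℝ, F (Fin.cons s ((fun _ => s) + u))
        = ∫ w : Fin m → ℝ, F (Fin.cons s w) :=
      integral_add_left_eq_self (fun w : Fin m → ℝ => F (Fin.cons s w)) (fun _ => s)
    have t2 := Measure.integral_comp_smul (volume : Measure (Fin m → ℝ))
      (fun u : Fin m → ℝ => F (Fin.cons s ((fun _ => s) + u))) ν
    have hfr : Module.finrank ℝ (Fin m → ℝ) = m := Module.finrank_fin_fun ℝ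
    rw [hfr] at t2
    have habs : |((ν : ℝ) ^ m)⁻¹| = (ν ^ m)⁻¹ := by
      rw [abs_of_nonneg (inv_nonneg.mpr (pow_nonneg hν.le m))]
    rw [habs, smul_eq_mul] at t2
    have hprof : ∀ v : Fin m → ℝ, F (Fin.cons s ((fun _ => s) + ν • v)) = F (prof m s ν v) := by
      intro v
      congr 1
    simp only [hprof] at t2
    rw [t1] at t2
    rw [t2, ← mul_assoc, mul_inv_cancel₀ (pow_pos hν m).ne', one_mul]
  rw [step1, step2]
  have : ∀ s : ℝ, ∫ w : Fin m → ℝ, G (s, w) = ν ^ m * ∫ v : Fin m → ℝ, F (prof m s ν v) :=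
    fun s => key s
  rw [integral_congr_ae (Eventually.of_forall this), integral_const_mul]

lemma meas_toReal {n : ℕ} (h H : (Fin n → ℝ) → ℝ) (hH : ∀ x ∈ unitCube n, h x = H x)
    (hHc : Continuous H) (hHnn : ∀ x, 0 ≤ H x) {A : Set (Fin n → ℝ)} (hA : MeasurableSet A)
    (hAc : A ⊆ unitCube n) :
    ((densityMeasure n h) A).toReal = ∫ x, A.indicator H x := by
  obtain ⟨M, hM⟩ : ∃ M, ∀ x ∈ unitCube n, ‖H x‖ ≤ M :=
    (isCompact_unitCube n).exists_bound_of_continuousOn hHc.continuousOn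
  have hAfin : volume A ≠ ⊤ :=
    (lt_of_le_of_lt (measure_mono hAc) (volume_unitCube_lt_top n)).ne
  have hint : IntegrableOn H A volume := by
    apply Measure.integrableOn_of_bounded hAfin hHc.aestronglyMeasurable
    filter_upwards [ae_restrict_mem hA] with x hx
    exact hM x (hAc hx)
  have step : (densityMeasure n h) A = ∫⁻ x in A, ENNReal.ofReal (H x) ∂volume := by
    rw [densityMeasure, withDensity_apply _ hA, Measure.restrict_restrict hA,
      inter_eq_self_of_subset_left hAc]
    exact setLIntegral_congr_fun hA (fun x hx => by rw [hH x (hAc hx)])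
  rw [step, ← MeasureTheory.ofReal_integral_eq_lintegral_ofReal hint
      (ae_of_all _ fun x => hHnn x),
    ENNReal.toReal_ofReal (integral_nonneg fun x => hHnn x), ← integral_indicator hA]


lemma isClosed_syncSet (n : ℕ) (ν : ℝ) : IsClosed (syncSet n ν) := by
  have hrep : syncSet n ν = unitCube n ∩
      ⋂ (i : Fin n) (j : Fin n), {x : Fin n → ℝ | i ≠ j → |x i - x j| ≤ ν} := by
    ext x; simp [syncSet, mem_iInter, Sep.sep]
  rw [hrep]
  refine (isClosed_unitCube n).inter (isClosed_iInter fun i => isClosed_iInter fun j => ?_)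
  by_cases hij : i = j
  · subst hij
    have : {x : Fin n → ℝ | i ≠ i → |x i - x i| ≤ ν} = univ := by
      ext x; simp
    rw [this]; exact isClosed_univ
  · have : {x : Fin n → ℝ | i ≠ j → |x i - x j| ≤ ν} = {x | |x i - x j| ≤ ν} := by
      ext x; simp [hij]
    rw [this]
    exact isClosed_le ((continuous_apply i).sub (continuous_apply j)).abs continuous_const

lemma measurableSet_syncSet (n : ℕ) (ν : ℝ) : MeasurableSet (syncSet n ν) :=
  (isClosed_syncSet n ν).measurableSet

lemma dct_general {α : Type*} [MeasurableSpace α] {μ : Measure α}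
    {F : ℝ → α → ℝ} {Λ : α → ℝ} {A : Set α} (hA : MeasurableSet A) (hAfin : μ A ≠ ⊤) (C : ℝ)
    (hmeas : ∀ᶠ ν in nhdsWithin (0:ℝ) (Ioi 0), AEStronglyMeasurable (F ν) μ)
    (hbd : ∀ᶠ ν in nhdsWithin (0:ℝ) (Ioi 0), ∀ᵐ x ∂μ, ‖F ν x‖ ≤ A.indicator (fun _ => C) x)
    (hlim : ∀ᵐ x ∂μ, Tendsto (fun ν => F ν x) (nhdsWithin (0:ℝ) (Ioi 0)) (nhds (Λ x))) :
    Tendsto (fun ν => ∫ x, F ν x ∂μ) (nhdsWithin (0:ℝ) (Ioi 0)) (nhds (∫ x, Λ x ∂μ)) := by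
  refine tendsto_integral_filter_of_dominated_convergence _ hmeas hbd ?_ hlim
  exact (integrableOn_const hAfin).integrable_indicator hA

lemma tendsto_slope_aux {T : ℝ → ℝ} {s d : ℝ} (hd : HasDerivAt T d s) (w : ℝ) :
    Tendsto (fun ν : ℝ => (T (s + ν * w) - T s) / ν) (nhdsWithin (0:ℝ) (Ioi 0))
      (nhds (d * w)) := by
  have hφ : HasDerivAt (fun ν : ℝ => s + ν * w) w 0 := by
    simpa using ((hasDerivAt_id (0:ℝ)).mul_const w).const_add s
  have hd' : HasDerivAt T d ((fun ν : ℝ => s + ν * w) 0) := by simpa using hd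
  have hc : HasDerivAt (fun ν : ℝ => T (s + ν * w)) (d * w) 0 := hd'.comp 0 hφ
  have h1 := hasDerivAt_iff_tendsto_slope.mp hc
  have h2 : Tendsto (slope (fun ν : ℝ => T (s + ν * w)) 0) (nhdsWithin (0:ℝ) (Ioi 0))
      (nhds (d * w)) :=
    h1.mono_left (nhdsWithin_mono 0 (fun x hx => ne_of_gt hx))
  refine h2.congr fun ν => ?_
  rw [slope_def_field]
  simp

lemma prof_eq {m : ℕ} (s ν : ℝ) (v : Fin m → ℝ) (i : Fin (m+1)) :
    prof m s ν v i = s + ν * csn v i := by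
  cases i using Fin.cases <;> simp [prof, csn]

lemma tendsto_prof {m : ℕ} (s : ℝ) (v : Fin m → ℝ) :
    Tendsto (fun ν : ℝ => prof m s ν v) (nhdsWithin (0:ℝ) (Ioi 0))
      (nhds (fun _ : Fin (m+1) => s)) := by
  rw [tendsto_pi_nhds]
  intro i
  have hco : Continuous fun ν : ℝ => s + ν * csn v i :=
    continuous_const.add (continuous_id.mul continuous_const)
  have h1 : Tendsto (fun ν : ℝ => s + ν * csn v i) (nhdsWithin (0:ℝ) (Ioi 0))
      (nhds (s + 0 * csn v i)) := (hco.tendsto 0).mono_left nhdsWithin_le_nhds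
  simp only [zero_mul, add_zero] at h1
  exact h1.congr fun ν => (prof_eq s ν v i).symm

def NSet (m : ℕ) (γ : ℝ) (T : ℝ → ℝ) (ν : ℝ) : Set (Fin (m+1) → ℝ) :=
  syncSet (m+1) ν ∩ (coupledMap (m+1) γ T) ⁻¹' (syncSet (m+1) ν)

def Om (m q : ℕ) (a : ℕ → ℝ) : Set (Fin (m+1) → ℝ) := {x | ∀ i, x i ∈ Uset q a}

def BSet (m q : ℕ) (a : ℕ → ℝ) (γ : ℝ) (T : ℝ → ℝ) (ν : ℝ) : Set (Fin (m+1) → ℝ) :=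
  NSet m γ T ν ∩ Om m q a

lemma isOpen_Om (m q : ℕ) (a : ℕ → ℝ) : IsOpen (Om m q a) := by
  have : Om m q a = ⋂ i, (fun x : Fin (m+1) → ℝ => x i) ⁻¹' (Uset q a) := by
    ext x; simp [Om, mem_iInter]
  rw [this]
  exact isOpen_iInter_of_finite fun i => isOpen_Uset.preimage (continuous_apply i)

lemma measurableSet_BSet {m q : ℕ} {a : ℕ → ℝ} {γ : ℝ} {T : ℝ → ℝ}
    (hT : Set.MapsTo T (Icc 0 1) (Icc 0 1)) (hγ0 : 0 ≤ γ) (hγ1 : γ ≤ 1)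
    (hg : ∀ l < q, ∃ g : ℝ → ℝ, ContDiff ℝ 2 g ∧ Set.EqOn T g (Ioo (a l) (a (l + 1))))
    {ν : ℝ} (hν : 0 ≤ ν) : MeasurableSet (BSet m q a γ T ν) := by
  have hTc : ContinuousOn T (Uset q a) := continuousOn_T_Uset hg
  have hOm : IsOpen (Om m q a) := isOpen_Om m q a
  have key : ∀ i j : Fin (m+1), MeasurableSet
      (Om m q a ∩ {x | (1 - γ) * |T (x i) - T (x j)| ≤ ν}) := by
    intro i j
    have hcont : ContinuousOn (fun x : Fin (m+1) → ℝ => (1 - γ) * |T (x i) - T (x j)|)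
        (Om m q a) := by
      have h1 : ContinuousOn (fun x : Fin (m+1) → ℝ => T (x i)) (Om m q a) :=
        hTc.comp (continuous_apply i).continuousOn (fun x hx => hx i)
      have h2 : ContinuousOn (fun x : Fin (m+1) → ℝ => T (x j)) (Om m q a) :=
        hTc.comp (continuous_apply j).continuousOn (fun x hx => hx j)
      exact continuousOn_const.mul ((h1.sub h2).abs)
    have hopen : IsOpen (Om m q a ∩
        (fun x : Fin (m+1) → ℝ => (1 - γ) * |T (x i) - T (x j)|) ⁻¹' (Ioi ν)) :=
      hcont.isOpen_inter_preimage hOm isOpen_Ioi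
    have hrepr : Om m q a ∩ {x | (1 - γ) * |T (x i) - T (x j)| ≤ ν}
        = (Om m q a) \ (Om m q a ∩
          (fun x : Fin (m+1) → ℝ => (1 - γ) * |T (x i) - T (x j)|) ⁻¹' (Ioi ν)) := by
      ext x
      simp only [mem_inter_iff, mem_setOf_eq, mem_diff, mem_preimage, mem_Ioi, not_and, not_lt]
      tauto
    rw [hrepr]
    exact hOm.measurableSet.diff hopen.measurableSet
  have hset : BSet m q a γ T ν = syncSet (m+1) ν ∩
      ⋂ (i : Fin (m+1)) (j : Fin (m+1)),
        (Om m q a ∩ {x | (1 - γ) * |T (x i) - T (x j)| ≤ ν}) := by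
    rw [BSet, NSet, numSet_eq (Nat.succ_pos m) hγ0 hγ1 hT hν]
    ext x
    simp only [mem_inter_iff, mem_iInter, mem_sep_iff, Om, mem_setOf_eq]
    constructor
    · rintro ⟨⟨hs, hP⟩, hO⟩
      exact ⟨hs, fun i j => ⟨hO, hP i j⟩⟩
    · rintro ⟨hs, hall⟩
      exact ⟨⟨hs, fun i j => (hall i j).2⟩, (hall 0 0).1⟩
  rw [hset]
  exact (measurableSet_syncSet _ _).inter
    (MeasurableSet.iInter fun i => MeasurableSet.iInter fun j => key i j)

lemma dens_null {n : ℕ} (h : (Fin n → ℝ) → ℝ) {Z : Set (Fin n → ℝ)} (hZm : MeasurableSet Z)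
    (hZ : volume Z = 0) : densityMeasure n h Z = 0 := by
  rw [densityMeasure, withDensity_apply _ hZm, Measure.restrict_restrict hZm]
  have h0 : volume (Z ∩ unitCube n) = 0 := measure_mono_null inter_subset_left hZ
  rw [Measure.restrict_eq_zero.mpr h0, lintegral_zero_measure]

lemma volume_cube_diff_Om {m q : ℕ} {a : ℕ → ℝ} (ha0 : a 0 = 0) (haq : a q = 1)
    (hstep : ∀ l < q, a l < a (l+1)) :
    volume (unitCube (m+1) \ Om m q a) = 0 := by
  have hsub : unitCube (m+1) \ Om m q a ⊆
      ⋃ (i : Fin (m+1)) (l : ℕ) (_ : l ≤ q), {x : Fin (m+1) → ℝ | x i = a l} := by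
    rintro x ⟨hx, hO⟩
    simp only [Om, mem_setOf_eq, not_forall] at hO
    obtain ⟨i, hi⟩ := hO
    by_contra hcon
    simp only [mem_iUnion, mem_setOf_eq, not_exists] at hcon
    exact hi (cover_lemma ha0 haq hstep (hx i) fun l hl heq => hcon i l hl heq)
  refine measure_mono_null hsub ?_
  exact measure_iUnion_null fun i => measure_iUnion_null fun l =>
    measure_iUnion_null fun _ => null_coord i (a l)

lemma dens_NSet_eq_BSet {m q : ℕ} {a : ℕ → ℝ} {γ : ℝ} {T : ℝ → ℝ}
    (h : (Fin (m+1) → ℝ) → ℝ)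
    (ha0 : a 0 = 0) (haq : a q = 1) (hstep : ∀ l < q, a l < a (l+1)) (ν : ℝ) :
    densityMeasure (m+1) h (NSet m γ T ν) = densityMeasure (m+1) h (BSet m q a γ T ν) := by
  have hZm : MeasurableSet (unitCube (m+1) \ Om m q a) :=
    (measurableSet_unitCube _).diff (isOpen_Om m q a).measurableSet
  have hZ0 : densityMeasure (m+1) h (unitCube (m+1) \ Om m q a) = 0 :=
    dens_null h hZm (volume_cube_diff_Om ha0 haq hstep)
  apply le_antisymm
  · have hsub : NSet m γ T ν ⊆ BSet m q a γ T ν ∪ (unitCube (m+1) \ Om m q a) := by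
      intro x hx
      by_cases hxo : x ∈ Om m q a
      · exact Or.inl ⟨hx, hxo⟩
      · exact Or.inr ⟨hx.1.1, hxo⟩
    calc densityMeasure (m+1) h (NSet m γ T ν)
        ≤ densityMeasure (m+1) h (BSet m q a γ T ν ∪ (unitCube (m+1) \ Om m q a)) :=
          measure_mono hsub
      _ ≤ densityMeasure (m+1) h (BSet m q a γ T ν)
          + densityMeasure (m+1) h (unitCube (m+1) \ Om m q a) := measure_union_le _ _
      _ = densityMeasure (m+1) h (BSet m q a γ T ν) := by rw [hZ0, add_zero]
  · exact measure_mono inter_subset_left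

lemma tendsto_inner_den_pt {m : ℕ} {H : (Fin (m+1) → ℝ) → ℝ} (hH : Continuous H)
    {s : ℝ} (hs : s ∈ Ioo (0:ℝ) 1) (v : Fin m → ℝ) :
    Tendsto (fun ν : ℝ => (syncSet (m+1) ν).indicator H (prof m s ν v))
      (nhdsWithin (0:ℝ) (Ioi 0))
      (nhds ((Qset m 1).indicator (fun _ => H (fun _ : Fin (m+1) => s)) v)) := by
  have hprof := tendsto_prof s v
  have hev : ∀ᶠ ν in nhdsWithin (0:ℝ) (Ioi 0), ∀ i, prof m s ν v i ∈ Icc (0:ℝ) 1 := by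
    have hopen : IsOpen {y : Fin (m+1) → ℝ | ∀ i, y i ∈ Ioo (0:ℝ) 1} := by
      have : {y : Fin (m+1) → ℝ | ∀ i, y i ∈ Ioo (0:ℝ) 1}
          = ⋂ i, (fun y : Fin (m+1) → ℝ => y i) ⁻¹' (Ioo (0:ℝ) 1) := by
        ext y; simp [mem_iInter]
      rw [this]
      exact isOpen_iInter_of_finite fun i => isOpen_Ioo.preimage (continuous_apply i)
    have hdiag : (fun _ : Fin (m+1) => s) ∈ {y : Fin (m+1) → ℝ | ∀ i, y i ∈ Ioo (0:ℝ) 1} :=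
      fun i => hs
    filter_upwards [hprof (hopen.mem_nhds hdiag)] with ν hν i
    exact Ioo_subset_Icc_self (hν i)
  by_cases hv : v ∈ Qset m 1
  · have hevmem : ∀ᶠ ν in nhdsWithin (0:ℝ) (Ioi 0),
        H (prof m s ν v) = (syncSet (m+1) ν).indicator H (prof m s ν v) := by
      filter_upwards [hev, self_mem_nhdsWithin] with ν hc hν0
      exact (indicator_of_mem ((prof_mem_syncSet hν0 v).mpr ⟨hc, hv⟩) H).symm
    have hlim : Tendsto (fun ν : ℝ => H (prof m s ν v)) (nhdsWithin (0:ℝ) (Ioi 0))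
        (nhds (H (fun _ : Fin (m+1) => s))) := (hH.tendsto _).comp hprof
    rw [indicator_of_mem hv]
    exact hlim.congr' hevmem
  · have hevmem : ∀ᶠ ν in nhdsWithin (0:ℝ) (Ioi 0),
        (0:ℝ) = (syncSet (m+1) ν).indicator H (prof m s ν v) := by
      filter_upwards [self_mem_nhdsWithin] with ν hν0
      refine (indicator_of_notMem ?_ H).symm
      intro hmem
      exact hv ((prof_mem_syncSet hν0 v).mp hmem).2
    rw [indicator_of_notMem hv]
    exact tendsto_const_nhds.congr' hevmem

lemma tendsto_inner_num_pt {m q : ℕ} {a : ℕ → ℝ} {T : ℝ → ℝ} {γ lam : ℝ}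
    (hγ0 : 0 ≤ γ) (hγ1 : γ < 1) (hlam0 : 0 < lam) (hlamγ : lam < 1 - γ)
    (hT : Set.MapsTo T (Icc 0 1) (Icc 0 1))
    (ha0 : a 0 = 0) (haq : a q = 1) (hstep : ∀ l < q, a l < a (l+1))
    (hg : ∀ l < q, ∃ g : ℝ → ℝ, ContDiff ℝ 2 g ∧ Set.EqOn T g (Ioo (a l) (a (l + 1))))
    (hderiv : ∀ l < q, ∀ x ∈ Ioo (a l) (a (l + 1)), 1 / lam ≤ |deriv T x|)
    {H : (Fin (m+1) → ℝ) → ℝ} (hH : Continuous H)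
    {l : ℕ} (hl : l < q) {s : ℝ} (hs : s ∈ Ioo (a l) (a (l+1)))
    {v : Fin m → ℝ}
    (hv : ∀ i j : Fin (m+1), i ≠ j → |csn v i - csn v j| ≠ ((1-γ) * |deriv T s|)⁻¹) :
    Tendsto (fun ν : ℝ => (BSet m q a γ T ν).indicator H (prof m s ν v))
      (nhdsWithin (0:ℝ) (Ioi 0))
      (nhds ((Qset m ((1-γ) * |deriv T s|)⁻¹).indicator
        (fun _ => H (fun _ : Fin (m+1) => s)) v)) := by
  set K := (1-γ) * |deriv T s| with hKdef
  have hd1γ : (0:ℝ) < 1 - γ := by linarith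
  have hds : 1 / lam ≤ |deriv T s| := hderiv l hl s hs
  have hKK : (1-γ) * (1/lam) ≤ K := mul_le_mul_of_nonneg_left hds hd1γ.le
  have hKgt : 1 < K := by
    have h1 : (1:ℝ) < (1-γ) * (1/lam) := by
      rw [mul_one_div, lt_div_iff₀ hlam0]
      linarith
    linarith
  have hK0 : (0:ℝ) < K := lt_trans one_pos hKgt
  have hr1 : K⁻¹ < 1 := by
    rw [inv_lt_one_iff₀]
    right; exact hKgt
  have hdT : HasDerivAt T (deriv T s) s := hasDerivAt_T hl hg hs
  have hpair : ∀ i j : Fin (m+1), Tendsto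
      (fun ν : ℝ => (1-γ) * |T (prof m s ν v i) - T (prof m s ν v j)| / ν)
      (nhdsWithin (0:ℝ) (Ioi 0)) (nhds (K * |csn v i - csn v j|)) := by
    intro i j
    have h1 := tendsto_slope_aux hdT (csn v i)
    have h2 := tendsto_slope_aux hdT (csn v j)
    have h3 : Tendsto (fun ν : ℝ => (T (s + ν * csn v i) - T (s + ν * csn v j)) / ν)
        (nhdsWithin (0:ℝ) (Ioi 0))
        (nhds (deriv T s * csn v i - deriv T s * csn v j)) := by
      refine (h1.sub h2).congr fun ν => ?_
      rw [div_sub_div_same, sub_sub_sub_cancel_right]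
    have h4 : Tendsto (fun ν : ℝ =>
        (1-γ) * |(T (s + ν * csn v i) - T (s + ν * csn v j)) / ν|)
        (nhdsWithin (0:ℝ) (Ioi 0))
        (nhds ((1-γ) * |deriv T s * csn v i - deriv T s * csn v j|)) :=
      tendsto_const_nhds.mul h3.abs
    have hval : (1-γ) * |deriv T s * csn v i - deriv T s * csn v j|
        = K * |csn v i - csn v j| := by
      rw [← mul_sub, abs_mul, hKdef, mul_assoc]
    rw [hval] at h4
    refine h4.congr' ?_
    filter_upwards [self_mem_nhdsWithin] with ν hν0
    rw [abs_div, abs_of_pos (show (0:ℝ) < ν from hν0), ← prof_eq, ← prof_eq]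
    ring
  have hOmev : ∀ᶠ ν in nhdsWithin (0:ℝ) (Ioi 0), prof m s ν v ∈ Om m q a := by
    have hdiagOm : (fun _ : Fin (m+1) => s) ∈ Om m q a := by
      intro i
      simp only [Uset, Finset.mem_range, mem_iUnion]
      exact ⟨l, hl, hs⟩
    exact tendsto_prof s v ((isOpen_Om m q a).mem_nhds hdiagOm)
  have hs01 : s ∈ Ioo (0:ℝ) 1 := by
    refine Uset_subset ha0 haq hstep ?_
    simp only [Uset, Finset.mem_range, mem_iUnion]
    exact ⟨l, hl, hs⟩
  have hcubeev : ∀ᶠ ν in nhdsWithin (0:ℝ) (Ioi 0), ∀ i, prof m s ν v i ∈ Icc (0:ℝ) 1 := by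
    have hopen : IsOpen {y : Fin (m+1) → ℝ | ∀ i, y i ∈ Ioo (0:ℝ) 1} := by
      have : {y : Fin (m+1) → ℝ | ∀ i, y i ∈ Ioo (0:ℝ) 1}
          = ⋂ i, (fun y : Fin (m+1) → ℝ => y i) ⁻¹' (Ioo (0:ℝ) 1) := by
        ext y; simp [mem_iInter]
      rw [this]
      exact isOpen_iInter_of_finite fun i => isOpen_Ioo.preimage (continuous_apply i)
    have hdiag : (fun _ : Fin (m+1) => s) ∈ {y : Fin (m+1) → ℝ | ∀ i, y i ∈ Ioo (0:ℝ) 1} :=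
      fun i => hs01
    filter_upwards [tendsto_prof s v (hopen.mem_nhds hdiag)] with ν hν i
    exact Ioo_subset_Icc_self (hν i)
  by_cases hvmem : v ∈ Qset m K⁻¹
  · have hlt : ∀ i j : Fin (m+1), K * |csn v i - csn v j| < 1 := by
      intro i j
      rcases eq_or_ne i j with rfl | hij
      · simpa using one_pos
      · have hle := hvmem i j
        have hne := hv i j hij
        have hstrict : |csn v i - csn v j| < K⁻¹ := lt_of_le_of_ne hle hne
        calc K * |csn v i - csn v j| < K * K⁻¹ := by
              exact mul_lt_mul_of_pos_left hstrict hK0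
          _ = 1 := mul_inv_cancel₀ hK0.ne'
    have hTev : ∀ᶠ ν in nhdsWithin (0:ℝ) (Ioi 0), ∀ i j : Fin (m+1),
        (1-γ) * |T (prof m s ν v i) - T (prof m s ν v j)| ≤ ν := by
      refine Filter.eventually_all.mpr fun i => Filter.eventually_all.mpr fun j => ?_
      have hev1 := (hpair i j).eventually_lt_const (hlt i j)
      filter_upwards [hev1, self_mem_nhdsWithin] with ν hb hν0
      exact le_of_lt ((div_lt_one hν0).mp hb)
    have hQ1 : v ∈ Qset m 1 := fun i j => le_trans (hvmem i j) hr1.le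
    have hmem : ∀ᶠ ν in nhdsWithin (0:ℝ) (Ioi 0),
        prof m s ν v ∈ BSet m q a γ T ν := by
      filter_upwards [hcubeev, hTev, hOmev, self_mem_nhdsWithin] with ν h1 h2 h3 hν0
      refine ⟨?_, h3⟩
      rw [NSet, numSet_eq (Nat.succ_pos m) hγ0 hγ1.le hT (le_of_lt hν0)]
      exact ⟨(prof_mem_syncSet hν0 v).mpr ⟨h1, hQ1⟩, h2⟩
    rw [indicator_of_mem hvmem]
    refine ((hH.tendsto _).comp (tendsto_prof s v)).congr' ?_
    filter_upwards [hmem] with ν hm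
    exact (indicator_of_mem hm H).symm
  · obtain ⟨i, j, hij⟩ : ∃ i j : Fin (m+1), K⁻¹ < |csn v i - csn v j| := by
      by_contra hcon
      push_neg at hcon
      exact hvmem fun i j => hcon i j
    have hgt : 1 < K * |csn v i - csn v j| := by
      calc (1:ℝ) = K * K⁻¹ := (mul_inv_cancel₀ hK0.ne').symm
        _ < K * |csn v i - csn v j| := mul_lt_mul_of_pos_left hij hK0
    have hev1 := (hpair i j).eventually_const_lt hgt
    have hnot : ∀ᶠ ν in nhdsWithin (0:ℝ) (Ioi 0),
        prof m s ν v ∉ BSet m q a γ T ν := by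
      filter_upwards [hev1, self_mem_nhdsWithin] with ν h1 hν0 hmem
      obtain ⟨hN, _⟩ := hmem
      rw [NSet, numSet_eq (Nat.succ_pos m) hγ0 hγ1.le hT (le_of_lt hν0)] at hN
      have hc := hN.2 i j
      have : (1-γ) * |T (prof m s ν v i) - T (prof m s ν v j)| / ν ≤ 1 :=
        (div_le_one hν0).mpr hc
      linarith
    rw [indicator_of_notMem hvmem]
    refine tendsto_const_nhds.congr' ?_
    filter_upwards [hnot] with ν hm
    exact (indicator_of_notMem hm H).symm

def Box (m : ℕ) : Set (Fin m → ℝ) := Set.pi Set.univ fun _ => Icc (-1:ℝ) 1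

lemma measurableSet_Box (m : ℕ) : MeasurableSet (Box m) :=
  MeasurableSet.univ_pi fun _ => measurableSet_Icc

lemma volume_Box_ne_top (m : ℕ) : volume (Box m) ≠ ⊤ := by
  rw [Box, volume_pi_pi]
  refine (ENNReal.prod_lt_top fun j _ => ?_).ne
  rw [Real.volume_Icc]
  exact ENNReal.ofReal_lt_top

lemma measurable_prof_v {m : ℕ} (s ν : ℝ) :
    Measurable (fun v : Fin m → ℝ => prof m s ν v) := by
  refine measurable_pi_lambda _ fun i => ?_
  have hrw : (fun v : Fin m → ℝ => prof m s ν v i) = fun v => s + ν * csn v i :=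
    funext fun v => prof_eq s ν v i
  rw [hrw]
  exact measurable_const.add (measurable_const.mul (continuous_csn i).measurable)

lemma measurable_prof_joint {m : ℕ} (ν : ℝ) :
    Measurable (fun p : ℝ × (Fin m → ℝ) => prof m p.1 ν p.2) := by
  refine measurable_pi_lambda _ fun i => ?_
  have hrw : (fun p : ℝ × (Fin m → ℝ) => prof m p.1 ν p.2 i)
      = fun p => p.1 + ν * csn p.2 i := funext fun p => prof_eq p.1 ν p.2 i
  rw [hrw]
  exact measurable_fst.add
    (measurable_const.mul ((continuous_csn i).measurable.comp measurable_snd))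

lemma indicator_norm_le {m : ℕ} {H : (Fin (m+1) → ℝ) → ℝ} {C : ℝ} (hC0 : 0 ≤ C)
    (hC : ∀ x ∈ unitCube (m+1), ‖H x‖ ≤ C)
    {A : Set (Fin (m+1) → ℝ)} {ν : ℝ} (hν : 0 < ν) (hA : A ⊆ syncSet (m+1) ν)
    (s : ℝ) (v : Fin m → ℝ) :
    ‖A.indicator H (prof m s ν v)‖ ≤ (Box m).indicator (fun _ => C) v := by
  by_cases hmem : prof m s ν v ∈ A
  · rw [indicator_of_mem hmem]
    have hsync := hA hmem
    have hpair := (prof_mem_syncSet hν v).mp hsync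
    have hvB : v ∈ Box m := by
      intro j _
      exact abs_le.mp (Qset_subset_box hpair.2 j)
    rw [indicator_of_mem hvB]
    exact hC _ hpair.1
  · rw [indicator_of_notMem hmem, norm_zero]
    exact Set.indicator_nonneg (fun _ _ => hC0) v

lemma ae_generic {m : ℕ} {r : ℝ} (hr : 0 < r) :
    ∀ᵐ v : Fin m → ℝ, ∀ i j : Fin (m+1), i ≠ j → |csn v i - csn v j| ≠ r := by
  have hnull : volume (⋃ (i : Fin (m+1)) (j : Fin (m+1)),
      ({v : Fin m → ℝ | csn v i - csn v j = r} ∪ {v | csn v i - csn v j = -r})) = 0 := by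
    refine measure_iUnion_null fun i => measure_iUnion_null fun j => ?_
    rcases eq_or_ne i j with rfl | hij
    · have h1 : {v : Fin m → ℝ | csn v i - csn v i = r} = ∅ := by
        ext v; simpa using fun hh => absurd hh.symm hr.ne'
      have h2 : {v : Fin m → ℝ | csn v i - csn v i = -r} = ∅ := by
        ext v; simp only [sub_self, mem_setOf_eq, mem_empty_iff_false, iff_false]
        intro hh; linarith
      rw [h1, h2]; simp
    · exact measure_union_null (null_pair hij r) (null_pair hij (-r))
  filter_upwards [measure_eq_zero_iff_ae_notMem.mp hnull] with v hv i j hij habs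
  simp only [mem_iUnion, mem_union, mem_setOf_eq, not_exists, not_or] at hv
  rcases (abs_eq hr.le).mp habs with h | h
  · exact (hv i j).1 h
  · exact (hv i j).2 h

lemma K_gt_one {γ lam d : ℝ} (hγ1 : γ < 1) (hlam0 : 0 < lam) (hlamγ : lam < 1 - γ)
    (hds : 1 / lam ≤ |d|) : 1 < (1-γ) * |d| := by
  have hd1γ : (0:ℝ) < 1 - γ := by linarith
  have hKK : (1-γ) * (1/lam) ≤ (1-γ) * |d| := mul_le_mul_of_nonneg_left hds hd1γ.le
  have h1 : (1:ℝ) < (1-γ) * (1/lam) := by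
    rw [mul_one_div, lt_div_iff₀ hlam0]
    linarith
  linarith

lemma tendsto_inner_den {m : ℕ} {H : (Fin (m+1) → ℝ) → ℝ} {C : ℝ}
    (hH : Continuous H) (hC0 : 0 ≤ C) (hC : ∀ x ∈ unitCube (m+1), ‖H x‖ ≤ C)
    {s : ℝ} (hs : s ∈ Ioo (0:ℝ) 1) :
    Tendsto (fun ν : ℝ => ∫ v : Fin m → ℝ, (syncSet (m+1) ν).indicator H (prof m s ν v))
      (nhdsWithin (0:ℝ) (Ioi 0))
      (nhds ((volume (Qset m 1)).toReal * H (fun _ : Fin (m+1) => s))) := by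
  have hval : ∫ v : Fin m → ℝ, (Qset m 1).indicator
      (fun _ => H (fun _ : Fin (m+1) => s)) v
      = (volume (Qset m 1)).toReal * H (fun _ : Fin (m+1) => s) := by
    rw [integral_indicator_const _ (measurableSet_Qset m 1), smul_eq_mul, measureReal_def]
  rw [← hval]
  refine dct_general (measurableSet_Box m) (volume_Box_ne_top m) C ?_ ?_ ?_
  · filter_upwards [self_mem_nhdsWithin] with ν hν
    exact ((hH.measurable.indicator (measurableSet_syncSet _ _)).comp
      (measurable_prof_v s ν)).aestronglyMeasurable
  · filter_upwards [self_mem_nhdsWithin] with ν hν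
    exact ae_of_all _ (indicator_norm_le hC0 hC hν (Set.Subset.refl _) s)
  · exact ae_of_all _ (fun v => tendsto_inner_den_pt hH hs v)

lemma BSet_subset_sync {m q : ℕ} {a : ℕ → ℝ} {γ : ℝ} {T : ℝ → ℝ} (ν : ℝ) :
    BSet m q a γ T ν ⊆ syncSet (m+1) ν :=
  Set.Subset.trans inter_subset_left inter_subset_left

lemma tendsto_inner_num {m q : ℕ} {a : ℕ → ℝ} {T : ℝ → ℝ} {γ lam : ℝ}
    {H : (Fin (m+1) → ℝ) → ℝ} {C : ℝ}
    (hγ0 : 0 ≤ γ) (hγ1 : γ < 1) (hlam0 : 0 < lam) (hlamγ : lam < 1 - γ)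
    (hT : Set.MapsTo T (Icc 0 1) (Icc 0 1))
    (ha0 : a 0 = 0) (haq : a q = 1) (hstep : ∀ l < q, a l < a (l+1))
    (hg : ∀ l < q, ∃ g : ℝ → ℝ, ContDiff ℝ 2 g ∧ Set.EqOn T g (Ioo (a l) (a (l + 1))))
    (hderiv : ∀ l < q, ∀ x ∈ Ioo (a l) (a (l + 1)), 1 / lam ≤ |deriv T x|)
    (hH : Continuous H) (hC0 : 0 ≤ C) (hC : ∀ x ∈ unitCube (m+1), ‖H x‖ ≤ C)
    {l : ℕ} (hl : l < q) {s : ℝ} (hs : s ∈ Ioo (a l) (a (l+1))) :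
    Tendsto (fun ν : ℝ => ∫ v : Fin m → ℝ, (BSet m q a γ T ν).indicator H (prof m s ν v))
      (nhdsWithin (0:ℝ) (Ioi 0))
      (nhds (((1-γ) * |deriv T s|)⁻¹ ^ m * ((volume (Qset m 1)).toReal
        * H (fun _ : Fin (m+1) => s)))) := by
  have hKgt : 1 < (1-γ) * |deriv T s| := K_gt_one hγ1 hlam0 hlamγ (hderiv l hl s hs)
  have hK0 : (0:ℝ) < (1-γ) * |deriv T s| := lt_trans one_pos hKgt
  have hr0 : (0:ℝ) < ((1-γ) * |deriv T s|)⁻¹ := inv_pos.mpr hK0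
  have hval : ∫ v : Fin m → ℝ, (Qset m ((1-γ) * |deriv T s|)⁻¹).indicator
      (fun _ => H (fun _ : Fin (m+1) => s)) v
      = ((1-γ) * |deriv T s|)⁻¹ ^ m * ((volume (Qset m 1)).toReal
        * H (fun _ : Fin (m+1) => s)) := by
    rw [integral_indicator_const _ (measurableSet_Qset m _), smul_eq_mul, measureReal_def,
      volume_Qset_smul hr0, ENNReal.toReal_mul,
      ENNReal.toReal_ofReal (pow_nonneg hr0.le m), mul_assoc]
  rw [← hval]
  refine dct_general (measurableSet_Box m) (volume_Box_ne_top m) C ?_ ?_ ?_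
  · filter_upwards [self_mem_nhdsWithin] with ν hν
    exact ((hH.measurable.indicator
      (measurableSet_BSet hT hγ0 hγ1.le hg (le_of_lt hν))).comp
      (measurable_prof_v s ν)).aestronglyMeasurable
  · filter_upwards [self_mem_nhdsWithin] with ν hν
    exact ae_of_all _ (indicator_norm_le hC0 hC hν (BSet_subset_sync ν) s)
  · filter_upwards [ae_generic hr0] with v hv
    exact tendsto_inner_num_pt hγ0 hγ1 hlam0 hlamγ hT ha0 haq hstep hg hderiv hH hl hs hv

lemma joint_integrable {m : ℕ} {H : (Fin (m+1) → ℝ) → ℝ} {C : ℝ} (hH : Continuous H)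
    (hC0 : 0 ≤ C) (hC : ∀ x ∈ unitCube (m+1), ‖H x‖ ≤ C)
    {A : Set (Fin (m+1) → ℝ)} (hA : MeasurableSet A) {ν : ℝ} (hν : 0 < ν)
    (hAs : A ⊆ syncSet (m+1) ν) :
    Integrable (fun p : ℝ × (Fin m → ℝ) => A.indicator H (prof m p.1 ν p.2))
      ((volume : Measure ℝ).prod (volume : Measure (Fin m → ℝ))) := by
  have hmeas : AEStronglyMeasurable
      (fun p : ℝ × (Fin m → ℝ) => A.indicator H (prof m p.1 ν p.2))
      ((volume : Measure ℝ).prod (volume : Measure (Fin m → ℝ))) :=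
    ((hH.measurable.indicator hA).comp (measurable_prof_joint ν)).aestronglyMeasurable
  have hSfin : ((volume : Measure ℝ).prod (volume : Measure (Fin m → ℝ)))
      ((Icc (0:ℝ) 1) ×ˢ Box m) ≠ ⊤ := by
    rw [Measure.prod_prod]
    exact (ENNReal.mul_lt_top (by rw [Real.volume_Icc]; exact ENNReal.ofReal_lt_top)
      (volume_Box_ne_top m).lt_top).ne
  have hgint : Integrable (((Icc (0:ℝ) 1) ×ˢ Box m).indicator fun _ => C)
      ((volume : Measure ℝ).prod (volume : Measure (Fin m → ℝ))) :=
    (integrableOn_const hSfin).integrable_indicator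
      (measurableSet_Icc.prod (measurableSet_Box m))
  refine Integrable.mono' hgint hmeas (ae_of_all _ fun p => ?_)
  by_cases hmem : prof m p.1 ν p.2 ∈ A
  · rw [indicator_of_mem hmem]
    have hpr := (prof_mem_syncSet hν p.2).mp (hAs hmem)
    have hp1 : p.1 ∈ Icc (0:ℝ) 1 := by simpa [prof_zero] using hpr.1 0
    have hvB : p.2 ∈ Box m := fun j _ => abs_le.mp (Qset_subset_box hpr.2 j)
    have hpS : p ∈ (Icc (0:ℝ) 1) ×ˢ Box m := ⟨hp1, hvB⟩
    rw [indicator_of_mem hpS]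
    exact hC _ hpr.1
  · rw [indicator_of_notMem hmem, norm_zero]
    exact Set.indicator_nonneg (fun _ _ => hC0) p

lemma integrand_zero_outside {m : ℕ} {H : (Fin (m+1) → ℝ) → ℝ}
    {A : Set (Fin (m+1) → ℝ)} {ν : ℝ} (hAs : A ⊆ syncSet (m+1) ν)
    {s : ℝ} (hsI : s ∉ Icc (0:ℝ) 1) (v : Fin m → ℝ) :
    A.indicator H (prof m s ν v) = 0 := by
  apply indicator_of_notMem
  intro hmem
  exact hsI (by simpa [prof_zero] using (hAs hmem).1 (0 : Fin (m+1)))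

lemma outer_bound {m : ℕ} {H : (Fin (m+1) → ℝ) → ℝ} {C : ℝ} (hC0 : 0 ≤ C)
    (hC : ∀ x ∈ unitCube (m+1), ‖H x‖ ≤ C)
    {A : Set (Fin (m+1) → ℝ)} {ν : ℝ} (hν : 0 < ν) (hAs : A ⊆ syncSet (m+1) ν) (s : ℝ) :
    ‖∫ v : Fin m → ℝ, A.indicator H (prof m s ν v)‖ ≤
      (Icc (0:ℝ) 1).indicator (fun _ => C * (volume (Box m)).toReal) s := by
  by_cases hsI : s ∈ Icc (0:ℝ) 1
  · rw [indicator_of_mem hsI]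
    have hb := norm_integral_le_of_norm_le
      ((integrableOn_const (volume_Box_ne_top m)).integrable_indicator
        (measurableSet_Box m))
      (ae_of_all _ fun v => indicator_norm_le hC0 hC hν hAs s v)
    refine hb.trans (le_of_eq ?_)
    rw [integral_indicator_const _ (measurableSet_Box m), smul_eq_mul, mul_comm, measureReal_def]
  · rw [indicator_of_notMem hsI]
    have hz : ∀ v : Fin m → ℝ, A.indicator H (prof m s ν v) = 0 :=
      integrand_zero_outside hAs hsI
    simp [hz]

lemma tendsto_psi_den {m : ℕ} {H : (Fin (m+1) → ℝ) → ℝ} {C : ℝ}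
    (hH : Continuous H) (hC0 : 0 ≤ C) (hC : ∀ x ∈ unitCube (m+1), ‖H x‖ ≤ C) :
    Tendsto (fun ν : ℝ => ∫ s : ℝ, ∫ v : Fin m → ℝ,
        (syncSet (m+1) ν).indicator H (prof m s ν v))
      (nhdsWithin (0:ℝ) (Ioi 0))
      (nhds (∫ s : ℝ, (Icc (0:ℝ) 1).indicator
        (fun t => (volume (Qset m 1)).toReal * H (fun _ : Fin (m+1) => t)) s)) := by
  refine dct_general (A := Icc (0:ℝ) 1) measurableSet_Icc
    (by rw [Real.volume_Icc]; exact ENNReal.ofReal_ne_top) (C * (volume (Box m)).toReal)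
    ?_ ?_ ?_
  · filter_upwards [self_mem_nhdsWithin] with ν hν
    exact ((joint_integrable hH hC0 hC (measurableSet_syncSet _ _) hν
      (Set.Subset.refl _)).integral_prod_left).aestronglyMeasurable
  · filter_upwards [self_mem_nhdsWithin] with ν hν
    exact ae_of_all _ fun s => outer_bound hC0 hC hν (Set.Subset.refl _) s
  · have hae : ∀ᵐ s : ℝ, s ∉ ({0, 1} : Set ℝ) :=
      measure_eq_zero_iff_ae_notMem.mp
        ((Set.Finite.insert 0 (finite_singleton 1)).measure_zero volume)
    filter_upwards [hae] with s hsB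
    by_cases hsI : s ∈ Icc (0:ℝ) 1
    · have hs01 : s ∈ Ioo (0:ℝ) 1 := by
        simp only [mem_insert_iff, mem_singleton_iff, not_or] at hsB
        exact ⟨lt_of_le_of_ne hsI.1 (Ne.symm hsB.1), lt_of_le_of_ne hsI.2 hsB.2⟩
      rw [indicator_of_mem hsI]
      exact tendsto_inner_den hH hC0 hC hs01
    · rw [indicator_of_notMem hsI]
      have hz : ∀ ν : ℝ, ∫ v : Fin m → ℝ,
          (syncSet (m+1) ν).indicator H (prof m s ν v) = 0 := by
        intro ν
        have hz0 := integrand_zero_outside (H := H) (Set.Subset.refl (syncSet (m+1) ν)) hsI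
        simp [hz0]
      exact tendsto_const_nhds.congr fun ν => (hz ν).symm

lemma tendsto_psi_num {m q : ℕ} {a : ℕ → ℝ} {T : ℝ → ℝ} {γ lam : ℝ}
    {H : (Fin (m+1) → ℝ) → ℝ} {C : ℝ}
    (hγ0 : 0 ≤ γ) (hγ1 : γ < 1) (hlam0 : 0 < lam) (hlamγ : lam < 1 - γ)
    (hT : Set.MapsTo T (Icc 0 1) (Icc 0 1))
    (ha0 : a 0 = 0) (haq : a q = 1) (hstep : ∀ l < q, a l < a (l+1))
    (hg : ∀ l < q, ∃ g : ℝ → ℝ, ContDiff ℝ 2 g ∧ Set.EqOn T g (Ioo (a l) (a (l + 1))))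
    (hderiv : ∀ l < q, ∀ x ∈ Ioo (a l) (a (l + 1)), 1 / lam ≤ |deriv T x|)
    (hH : Continuous H) (hC0 : 0 ≤ C) (hC : ∀ x ∈ unitCube (m+1), ‖H x‖ ≤ C) :
    Tendsto (fun ν : ℝ => ∫ s : ℝ, ∫ v : Fin m → ℝ,
        (BSet m q a γ T ν).indicator H (prof m s ν v))
      (nhdsWithin (0:ℝ) (Ioi 0))
      (nhds (∫ s : ℝ, (Icc (0:ℝ) 1).indicator
        (fun t => ((1-γ) * |deriv T t|)⁻¹ ^ m * ((volume (Qset m 1)).toReal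
          * H (fun _ : Fin (m+1) => t))) s)) := by
  refine dct_general (A := Icc (0:ℝ) 1) measurableSet_Icc
    (by rw [Real.volume_Icc]; exact ENNReal.ofReal_ne_top) (C * (volume (Box m)).toReal)
    ?_ ?_ ?_
  · filter_upwards [self_mem_nhdsWithin] with ν hν
    exact ((joint_integrable hH hC0 hC (measurableSet_BSet hT hγ0 hγ1.le hg hν.le) hν
      (BSet_subset_sync ν)).integral_prod_left).aestronglyMeasurable
  · filter_upwards [self_mem_nhdsWithin] with ν hν
    exact ae_of_all _ fun s => outer_bound hC0 hC hν (BSet_subset_sync ν) s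
  · have hae : ∀ᵐ s : ℝ, s ∉ ⋃ (l : ℕ) (_ : l ≤ q), ({a l} : Set ℝ) :=
      measure_eq_zero_iff_ae_notMem.mp
        (measure_iUnion_null fun l => measure_iUnion_null fun _ => measure_singleton _)
    filter_upwards [hae] with s hsB
    by_cases hsI : s ∈ Icc (0:ℝ) 1
    · have hne : ∀ l ≤ q, s ≠ a l := by
        intro l hl heq
        exact hsB (mem_iUnion.mpr ⟨l, mem_iUnion.mpr ⟨hl, heq⟩⟩)
      have hUs := cover_lemma ha0 haq hstep hsI hne
      simp only [Uset, Finset.mem_range, mem_iUnion] at hUs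
      obtain ⟨l, hl, hsIoo⟩ := hUs
      rw [indicator_of_mem hsI]
      exact tendsto_inner_num hγ0 hγ1 hlam0 hlamγ hT ha0 haq hstep hg hderiv hH hC0 hC hl hsIoo
    · rw [indicator_of_notMem hsI]
      have hz : ∀ ν : ℝ, ∫ v : Fin m → ℝ,
          (BSet m q a γ T ν).indicator H (prof m s ν v) = 0 := by
        intro ν
        have hz0 := integrand_zero_outside (H := H)
          (BSet_subset_sync (m := m) (q := q) (a := a) (γ := γ) (T := T) ν) hsI
        simp [hz0]
      exact tendsto_const_nhds.congr fun ν => (hz ν).symm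

end SyncAux

open SyncAux in
/-- for a continuous density `h` bounded below away from zero, the ratio
`μ(S_ν ∩ T̂⁻¹ S_ν) / μ(S_ν)` converges, as `ν → 0⁺`, to
`(1−γ)^{−(n−1)} · (∫₀¹ h(x,…,x)·|T'(x)|^{−(n−1)} dx) / (∫₀¹ h(x,…,x) dx)`.
(Here `deriv T` is meaningfully defined at Lebesgue-almost every `x ∈ [0,1]`, namely
at all interior points of the partition intervals of `T`.) -/
theorem sync_ratio_tendsto_of_continuous
    (n : ℕ) (hn : 2 ≤ n) (lam γ : ℝ)
    (hlam : lam ∈ Ioo (0:ℝ) 1) (hγ : γ ∈ Ico (0:ℝ) 1) (hlamγ : lam < 1 - γ)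
    (T : ℝ → ℝ) (hT : Set.MapsTo T (Icc 0 1) (Icc 0 1))
    (hpw : ∃ q a, PiecewiseC2Expanding T lam q a)
    (h : (Fin n → ℝ) → ℝ) (hcont : ContinuousOn h (unitCube n))
    (hnonneg : ∀ x ∈ unitCube n, 0 ≤ h x)
    (c : ℝ) (hc : 0 < c) (hinf : ∀ x ∈ unitCube n, c ≤ h x) :
    Filter.Tendsto
      (fun ν : ℝ =>
        ((densityMeasure n h)
            (syncSet n ν ∩ (coupledMap n γ T) ⁻¹' (syncSet n ν))).toReal /
          ((densityMeasure n h) (syncSet n ν)).toReal)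
      (nhdsWithin 0 (Ioi 0))
      (nhds (((1 - γ) ^ (n - 1))⁻¹ *
        ((∫ x in Icc (0:ℝ) 1, h (fun _ => x) / |deriv T x| ^ (n - 1)) /
          (∫ x in Icc (0:ℝ) 1, h (fun _ => x))))) := by
  obtain ⟨m, rfl⟩ : ∃ m, n = m + 1 := ⟨n - 1, by omega⟩
  simp only [Nat.add_sub_cancel]
  obtain ⟨q, a, hq1, ha0, haq, hstep, hinj, hg, hderiv⟩ := hpw
  obtain ⟨hγ0, hγ1⟩ := hγ
  obtain ⟨hlam0, hlam1⟩ := hlam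
  -- the clamped continuous extension of `h`
  set clamp : (Fin (m+1) → ℝ) → (Fin (m+1) → ℝ) := fun x i => max 0 (min 1 (x i))
    with hclampdef
  have hclampcont : Continuous clamp :=
    continuous_pi fun i => continuous_const.max (continuous_const.min (continuous_apply i))
  have hclampmem : ∀ x, clamp x ∈ unitCube (m+1) := by
    intro x i
    exact ⟨le_max_left 0 _, max_le (by norm_num) (min_le_left 1 _)⟩
  have hclampid : ∀ x ∈ unitCube (m+1), clamp x = x := by
    intro x hx
    funext i
    have h1 := (hx i).1
    have h2 := (hx i).2
    simp only [hclampdef]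
    rw [min_eq_right h2, max_eq_right h1]
  set H : (Fin (m+1) → ℝ) → ℝ := fun x => h (clamp x) with hHdef
  have hHcont : Continuous H := hcont.comp_continuous hclampcont hclampmem
  have hHeq : ∀ x ∈ unitCube (m+1), h x = H x := by
    intro x hx
    simp only [hHdef, hclampid x hx]
  have hHnn : ∀ x, 0 ≤ H x := fun x => hnonneg _ (hclampmem x)
  obtain ⟨C, hC⟩ :=
    (isCompact_unitCube (m+1)).exists_bound_of_continuousOn hHcont.continuousOn
  have hC0 : 0 ≤ C :=
    le_trans (norm_nonneg _) (hC (fun _ => 0) (fun i => ⟨le_refl 0, zero_le_one⟩))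
  have hcubeind : Integrable ((unitCube (m+1)).indicator fun _ => C) volume :=
    (integrableOn_const (volume_unitCube_lt_top (m+1)).ne).integrable_indicator
      (measurableSet_unitCube (m+1))
  have hIndInt : ∀ {A : Set (Fin (m+1) → ℝ)}, MeasurableSet A → A ⊆ unitCube (m+1) →
      Integrable (A.indicator H) volume := by
    intro A hA hAc
    refine Integrable.mono' hcubeind
      ((hHcont.measurable.indicator hA).aestronglyMeasurable) (ae_of_all _ fun x => ?_)
    by_cases hx : x ∈ A
    · rw [indicator_of_mem hx, indicator_of_mem (hAc hx)]
      exact hC x (hAc hx)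
    · rw [indicator_of_notMem hx, norm_zero]
      exact Set.indicator_nonneg (fun _ _ => hC0) x
  have hsync_cube : ∀ ν : ℝ, syncSet (m+1) ν ⊆ unitCube (m+1) := fun ν x hx => hx.1
  -- representation of the two measures
  have hrepN : ∀ ν : ℝ, 0 < ν →
      ((densityMeasure (m+1) h)
        (syncSet (m+1) ν ∩ (coupledMap (m+1) γ T) ⁻¹' (syncSet (m+1) ν))).toReal
      = ν ^ m * ∫ s : ℝ, ∫ v : Fin m → ℝ,
          (BSet m q a γ T ν).indicator H (prof m s ν v) := by
    intro ν hν
    have hBm : MeasurableSet (BSet m q a γ T ν) := measurableSet_BSet hT hγ0 hγ1.le hg hν.le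
    have hBc : BSet m q a γ T ν ⊆ unitCube (m+1) := (BSet_subset_sync ν).trans (hsync_cube ν)
    have e1 : (densityMeasure (m+1) h)
        (syncSet (m+1) ν ∩ (coupledMap (m+1) γ T) ⁻¹' (syncSet (m+1) ν))
        = (densityMeasure (m+1) h) (BSet m q a γ T ν) :=
      dens_NSet_eq_BSet h ha0 haq hstep ν
    rw [e1, meas_toReal h H hHeq hHcont hHnn hBm hBc,
      rep_integral _ (hIndInt hBm hBc) hν]
  have hrepD : ∀ ν : ℝ, 0 < ν →
      ((densityMeasure (m+1) h) (syncSet (m+1) ν)).toReal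
      = ν ^ m * ∫ s : ℝ, ∫ v : Fin m → ℝ,
          (syncSet (m+1) ν).indicator H (prof m s ν v) := by
    intro ν hν
    rw [meas_toReal h H hHeq hHcont hHnn (measurableSet_syncSet _ _) (hsync_cube ν),
      rep_integral _ (hIndInt (measurableSet_syncSet _ _) (hsync_cube ν)) hν]
  -- the two limits
  have htn := tendsto_psi_num hγ0 hγ1 hlam0 hlamγ hT ha0 haq hstep hg hderiv hHcont hC0 hC
  have htd := tendsto_psi_den hHcont hC0 hC
  have hVQpos : 0 < (volume (Qset m 1)).toReal :=
    ENNReal.toReal_pos (volume_Qset_pos m).ne' (volume_Qset_lt_top m).ne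
  -- identify the limit values
  have hLn : (∫ s : ℝ, (Icc (0:ℝ) 1).indicator
      (fun t => ((1-γ) * |deriv T t|)⁻¹ ^ m * ((volume (Qset m 1)).toReal
        * H (fun _ : Fin (m+1) => t))) s)
      = (volume (Qset m 1)).toReal * ((1-γ)⁻¹ ^ m
        * ∫ x in Icc (0:ℝ) 1, h (fun _ => x) / |deriv T x| ^ m) := by
    rw [integral_indicator measurableSet_Icc]
    have hcongr : ∀ t ∈ Icc (0:ℝ) 1,
        ((1-γ) * |deriv T t|)⁻¹ ^ m * ((volume (Qset m 1)).toReal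
          * H (fun _ : Fin (m+1) => t))
        = (volume (Qset m 1)).toReal * ((1-γ)⁻¹ ^ m
          * (h (fun _ => t) / |deriv T t| ^ m)) := by
      intro t ht
      have hdiag : (fun _ : Fin (m+1) => t) ∈ unitCube (m+1) := fun i => ht
      rw [hHeq _ hdiag, mul_inv, mul_pow, div_eq_mul_inv, ← inv_pow]
      ring
    rw [setIntegral_congr_fun measurableSet_Icc hcongr, integral_const_mul, integral_const_mul]
  have hLd : (∫ s : ℝ, (Icc (0:ℝ) 1).indicator
      (fun t => (volume (Qset m 1)).toReal * H (fun _ : Fin (m+1) => t)) s)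
      = (volume (Qset m 1)).toReal * ∫ x in Icc (0:ℝ) 1, h (fun _ => x) := by
    rw [integral_indicator measurableSet_Icc]
    have hcongr : ∀ t ∈ Icc (0:ℝ) 1,
        (volume (Qset m 1)).toReal * H (fun _ : Fin (m+1) => t)
        = (volume (Qset m 1)).toReal * h (fun _ => t) := by
      intro t ht
      rw [hHeq _ (fun i => ht)]
    rw [setIntegral_congr_fun measurableSet_Icc hcongr, integral_const_mul]
  rw [hLn] at htn
  rw [hLd] at htd
  -- positivity of the denominator limit
  have hI2int : IntegrableOn (fun x : ℝ => h (fun _ => x)) (Icc (0:ℝ) 1) := by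
    have hint : IntegrableOn (fun x : ℝ => H (fun _ : Fin (m+1) => x)) (Icc (0:ℝ) 1) :=
      (hHcont.comp (continuous_pi fun _ => continuous_id)).integrableOn_Icc
    exact hint.congr_fun (fun x hx => (hHeq _ (fun i => hx)).symm) measurableSet_Icc
  have hI2pos : 0 < ∫ x in Icc (0:ℝ) 1, h (fun _ => x) := by
    have hconst : ∫ _x in Icc (0:ℝ) 1, c = c := by
      rw [setIntegral_const, measureReal_def, Real.volume_Icc]
      norm_num
    have hmono : ∫ _x in Icc (0:ℝ) 1, c ≤ ∫ x in Icc (0:ℝ) 1, h (fun _ => x) := by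
      refine setIntegral_mono_on
        (integrableOn_const (by rw [Real.volume_Icc]; exact ENNReal.ofReal_ne_top))
        hI2int measurableSet_Icc (fun x hx => ?_)
      exact hinf _ (fun i => hx)
    linarith
  have hLdne : (volume (Qset m 1)).toReal * (∫ x in Icc (0:ℝ) 1, h (fun _ => x)) ≠ 0 :=
    (mul_pos hVQpos hI2pos).ne'
  have hdiv := htn.div htd hLdne
  have hev : (fun ν : ℝ =>
      ((densityMeasure (m+1) h)
        (syncSet (m+1) ν ∩ (coupledMap (m+1) γ T) ⁻¹' (syncSet (m+1) ν))).toReal /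
        ((densityMeasure (m+1) h) (syncSet (m+1) ν)).toReal)
      =ᶠ[nhdsWithin (0:ℝ) (Ioi 0)]
      (fun ν : ℝ => (∫ s : ℝ, ∫ v : Fin m → ℝ,
          (BSet m q a γ T ν).indicator H (prof m s ν v)) /
        (∫ s : ℝ, ∫ v : Fin m → ℝ, (syncSet (m+1) ν).indicator H (prof m s ν v))) := by
    filter_upwards [self_mem_nhdsWithin] with ν hν
    rw [hrepN ν hν, hrepD ν hν, mul_div_mul_left _ _ (pow_ne_zero m (ne_of_gt hν))]
  have hfinal := hdiv.congr' hev.symm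
  have hvals : ((volume (Qset m 1)).toReal * ((1-γ)⁻¹ ^ m
        * ∫ x in Icc (0:ℝ) 1, h (fun _ => x) / |deriv T x| ^ m)) /
      ((volume (Qset m 1)).toReal * ∫ x in Icc (0:ℝ) 1, h (fun _ => x))
      = ((1 - γ) ^ m)⁻¹ *
        ((∫ x in Icc (0:ℝ) 1, h (fun _ => x) / |deriv T x| ^ m) /
          (∫ x in Icc (0:ℝ) 1, h (fun _ => x))) := by
    rw [mul_div_mul_left _ _ hVQpos.ne', ← inv_pow, mul_div_assoc]
  rw [hvals] at hfinal
  exact hfinal
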